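/- Let G be the square of a cycle of even length ℓ ≥ 6, with vertices x_0,…,x_{ℓ−1} in cyclic order. Then the set {x_0, x_1, x_2, x_3, x_4, x_6, x_8, …, x_{ℓ−2}} induces a subgraph isomorphic to a subdivision of the wheel W_4, and its complement in V(G) induces a connected subgraph. -/

import Mathlib

open SimpleGraph

/-- Subdivide the edge `uv` of `G`: the new vertex is `none`. -/
def SubdivideEdge {V : Type} (G : SimpleGraph V) (u v : V) : SimpleGraph (Option V) :=
  SimpleGraph.fromRel (fun a b =>
    (∃ x y : V, a = some x ∧ b = some y ∧ G.Adj x y ∧ s(x, y) ≠ s(u, v)) ∨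
    (a = none ∧ (b = some u ∨ b = some v)))

/-- `IsSubdivisionOf G H` : `G` is isomorphic to a graph obtained from `H` by
repeatedly subdividing edges. -/
inductive IsSubdivisionOf : {V W : Type} → SimpleGraph V → SimpleGraph W → Prop
  | base {V W : Type} {G : SimpleGraph V} {H : SimpleGraph W} (e : G ≃g H) :
      IsSubdivisionOf G H
  | subdiv {V W U : Type} {G : SimpleGraph V} {H : SimpleGraph W} {S : SimpleGraph U}
      {u v : U} (h : S.Adj u v) (hS : IsSubdivisionOf S H)
      (e : G ≃g SubdivideEdge S u v) : IsSubdivisionOf G H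

def K4 : SimpleGraph (Fin 4) := ⊤

def K5 : SimpleGraph (Fin 5) := ⊤

/-- `K_4` minus one edge. -/
def K4minus : SimpleGraph (Fin 4) := K4.deleteEdges {s((0 : Fin 4), (1 : Fin 4))}

/-- The wheel with `n` rim vertices; the hub is `none`. -/
def Wheel (n : ℕ) : SimpleGraph (Option (Fin n)) :=
  SimpleGraph.fromRel (fun a b =>
    a = none ∨ ∃ i j : Fin n, a = some i ∧ b = some j ∧ (i.val + 1) % n = j.val)

/-- The prism `K_2 × K_3`. -/
def Prism : SimpleGraph (Fin 2 × Fin 3) :=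
  SimpleGraph.boxProd (⊤ : SimpleGraph (Fin 2)) (⊤ : SimpleGraph (Fin 3))

def K33 : SimpleGraph (Fin 3 ⊕ Fin 3) := completeBipartiteGraph (Fin 3) (Fin 3)

/-- `H` is isomorphic to a subdivision of a wheel, the prism, or `K_{3,3}`. -/
def IsWPKSubdivision {V : Type} (H : SimpleGraph V) : Prop :=
  (∃ n, 3 ≤ n ∧ IsSubdivisionOf H (Wheel n)) ∨
    IsSubdivisionOf H Prism ∨ IsSubdivisionOf H K33

/-- The square of a cycle of length `n`. -/
def cycleSq (n : ℕ) : SimpleGraph (Fin n) :=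
  SimpleGraph.fromRel (fun a b => (a.val + 1) % n = b.val ∨ (a.val + 2) % n = b.val)

/-- The cycle of length `n`. -/
def cycleG (n : ℕ) : SimpleGraph (Fin n) :=
  SimpleGraph.fromRel (fun a b => (a.val + 1) % n = b.val)

/-- Membership in the class 𝒞 of (simple) connected graphs of minimum degree at least 4. -/
def InC {V : Type} (G : SimpleGraph V) : Prop :=
  G.Connected ∧ ∀ v : V, 4 ≤ (G.neighborSet v).ncard

/-- Contract the edge `xy` of `G` to the vertex `x` and simplify. -/
def contractEdge {V : Type} (G : SimpleGraph V) (x y : V) :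
    SimpleGraph {z : V // z ≠ y} :=
  SimpleGraph.fromRel (fun a b =>
    G.Adj a.val b.val ∨ (a.val = x ∧ G.Adj y b.val) ∨ (b.val = x ∧ G.Adj a.val y))

/-- `G` is 4-connected: at least 5 vertices and deleting any at most 3 vertices
leaves a connected graph. -/
def FourConnected {V : Type} [Fintype V] (G : SimpleGraph V) : Prop :=
  5 ≤ Fintype.card V ∧
    ∀ s : Finset V, s.card ≤ 3 → (G.induce ((↑s : Set V)ᶜ)).Connected

/-- `G` is 3-connected: at least 4 vertices and deleting any at most 2 vertices
leaves a connected graph. -/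
def ThreeConnected {V : Type} [Fintype V] (G : SimpleGraph V) : Prop :=
  4 ≤ Fintype.card V ∧
    ∀ s : Finset V, s.card ≤ 2 → (G.induce ((↑s : Set V)ᶜ)).Connected

/-- Planarity, encoded via Kuratowski's characterization: no subgraph is a
subdivision of `K_5` or `K_{3,3}`. -/
def KuratowskiPlanar {V : Type} (G : SimpleGraph V) : Prop :=
  ¬ ∃ H : G.Subgraph, IsSubdivisionOf H.coe K5 ∨ IsSubdivisionOf H.coe K33

/-- The friendship graph made of `n` triangles glued at the hub `none`. -/
def FriendshipGraph (n : ℕ) : SimpleGraph (Option (Fin n × Fin 2)) :=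
  SimpleGraph.fromRel (fun a b =>
    a = none ∨ ∃ (i : Fin n) (p q : Fin 2), a = some (i, p) ∧ b = some (i, q))

def IsFriendship {V : Type} (G : SimpleGraph V) : Prop :=
  ∃ n : ℕ, 1 ≤ n ∧ Nonempty (G ≃g FriendshipGraph n)

/-- Membership in the class of (simple) connected graphs of minimum degree at least 2. -/
def InC2 {V : Type} (G : SimpleGraph V) : Prop :=
  G.Connected ∧ ∀ v : V, 2 ≤ (G.neighborSet v).ncard

lemma isSubdivisionOf_of_iso {V V' W : Type} {G : SimpleGraph V} {G' : SimpleGraph V'}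
    {H : SimpleGraph W} (e : G' ≃g G) (h : IsSubdivisionOf G H) : IsSubdivisionOf G' H := by
  cases h with
  | base e' => exact .base (e.trans e')
  | subdiv hadj hS e' => exact .subdiv hadj hS (e.trans e')

/-- Wheel `W_4` with hub `0`, rim `1,2,3,4`, and the rim edge `4–1`
subdivided `m` times via `5,…,4+m`. -/
def Wm (m : ℕ) : SimpleGraph (Fin (5 + m)) :=
  SimpleGraph.fromRel (fun a b =>
    (a.val = 0 ∧ (b.val = 1 ∨ b.val = 2 ∨ b.val = 3 ∨ b.val = 4)) ∨
    (1 ≤ a.val ∧ a.val + 1 = b.val) ∨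
    (a.val = 4 + m ∧ b.val = 1))

lemma wm_adj (m : ℕ) (a b : Fin (5 + m)) :
    (Wm m).Adj a b ↔ a.val ≠ b.val ∧
      ((a.val = 0 ∧ (b.val = 1 ∨ b.val = 2 ∨ b.val = 3 ∨ b.val = 4)) ∨
       (1 ≤ a.val ∧ a.val + 1 = b.val) ∨
       (a.val = 4 + m ∧ b.val = 1) ∨
       (b.val = 0 ∧ (a.val = 1 ∨ a.val = 2 ∨ a.val = 3 ∨ a.val = 4)) ∨
       (1 ≤ b.val ∧ b.val + 1 = a.val) ∨
       (b.val = 4 + m ∧ a.val = 1)) := by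
  rw [Wm, SimpleGraph.fromRel_adj, Ne, Ne, Fin.ext_iff]
  omega
instance wheelAdjDec (n : ℕ) : DecidableRel (Wheel n).Adj := fun a b =>
  decidable_of_iff' _ (SimpleGraph.fromRel_adj _ a b)

instance wmAdjDec (m : ℕ) : DecidableRel (Wm m).Adj := fun a b =>
  decidable_of_iff' _ (SimpleGraph.fromRel_adj _ a b)

def wheelEquiv : Fin 5 ≃ Option (Fin 4) :=
  ⟨![none, some 0, some 1, some 2, some 3],
    fun o => o.elim 0 (fun i => i.succ), by decide, by decide⟩

lemma wm_zero_iso : Nonempty (Wm 0 ≃g Wheel 4) := by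
  have key : ∀ a b : Fin 5, (Wheel 4).Adj (wheelEquiv a) (wheelEquiv b) ↔ (Wm 0).Adj a b := by
    decide
  exact ⟨⟨wheelEquiv, key _ _⟩⟩
lemma subdivideEdge_adj {V : Type} (G : SimpleGraph V) (u v : V) (a b : Option V) :
    (SubdivideEdge G u v).Adj a b ↔
      (∃ x y : V, a = some x ∧ b = some y ∧ G.Adj x y ∧ s(x, y) ≠ s(u, v)) ∨
      (a = none ∧ (b = some u ∨ b = some v)) ∨
      (b = none ∧ (a = some u ∨ a = some v)) := by
  rw [SubdivideEdge, SimpleGraph.fromRel_adj]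
  constructor
  · rintro ⟨hne, (⟨x, y, hx, hy, hadj, hs⟩ | h) | (⟨x, y, hx, hy, hadj, hs⟩ | h)⟩
    · exact Or.inl ⟨x, y, hx, hy, hadj, hs⟩
    · exact Or.inr (Or.inl h)
    · exact Or.inl ⟨y, x, hy, hx, hadj.symm, by rwa [Sym2.eq_swap]⟩
    · exact Or.inr (Or.inr h)
  · rintro (⟨x, y, hx, hy, hadj, hs⟩ | ⟨ha, hb⟩ | ⟨hb, ha⟩)
    · subst hx hy
      exact ⟨by simpa using hadj.ne, Or.inl (Or.inl ⟨x, y, rfl, rfl, hadj, hs⟩)⟩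
    · subst ha
      rcases hb with hb | hb <;> subst hb <;>
        exact ⟨by simp, Or.inl (Or.inr ⟨rfl, by simp⟩)⟩
    · subst hb
      rcases ha with ha | ha <;> subst ha <;>
        exact ⟨by simp, Or.inr (Or.inr ⟨rfl, by simp⟩)⟩

lemma subdivideEdge_some_some {V : Type} (G : SimpleGraph V) (u v x y : V) :
    (SubdivideEdge G u v).Adj (some x) (some y) ↔ G.Adj x y ∧ s(x, y) ≠ s(u, v) := by
  simp [subdivideEdge_adj]

lemma subdivideEdge_none_some {V : Type} (G : SimpleGraph V) (u v y : V) :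
    (SubdivideEdge G u v).Adj none (some y) ↔ y = u ∨ y = v := by
  simp [subdivideEdge_adj, eq_comm]

lemma subdivideEdge_some_none {V : Type} (G : SimpleGraph V) (u v x : V) :
    (SubdivideEdge G u v).Adj (some x) none ↔ x = u ∨ x = v := by
  simp [subdivideEdge_adj, eq_comm]

lemma subdivideEdge_none_none {V : Type} (G : SimpleGraph V) (u v : V) :
    ¬ (SubdivideEdge G u v).Adj none none := by
  simp [subdivideEdge_adj]

def stepEquiv (m : ℕ) : Fin (5 + (m + 1)) ≃ Option (Fin (5 + m)) where
  toFun i := if h : i.val < 5 + m then some ⟨i.val, h⟩ else none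
  invFun o := o.elim ⟨5 + m, by omega⟩ (fun j => ⟨j.val, by omega⟩)
  left_inv i := by
    by_cases h : i.val < 5 + m
    · simp [h]
    · have : i.val = 5 + m := by omega
      simp [h, Fin.ext_iff, this]
  right_inv o := by
    cases o with
    | none => simp
    | some j => simp [j.isLt]

lemma wm_subdivision (m : ℕ) : IsSubdivisionOf (Wm m) (Wheel 4) := by
  induction m with
  | zero => exact .base wm_zero_iso.some
  | succ m ih =>
    have huv : (Wm m).Adj ⟨4 + m, by omega⟩ ⟨1, by omega⟩ := by
      rw [wm_adj]; simp; omega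
    refine .subdiv huv ih ⟨stepEquiv m, ?_⟩
    intro a b
    have ha := a.isLt
    have hb := b.isLt
    by_cases h1 : a.val < 5 + m <;> by_cases h2 : b.val < 5 + m <;>
      simp only [stepEquiv, Equiv.coe_fn_mk, h1, h2, dite_true, dite_false, dif_pos, dif_neg,
        not_false_iff]
    · rw [subdivideEdge_some_some, wm_adj, wm_adj]
      simp only [ne_eq, Sym2.eq_iff, Fin.ext_iff]
      omega
    · rw [subdivideEdge_some_none, wm_adj]
      simp only [Fin.ext_iff]
      omega
    · rw [subdivideEdge_none_some, wm_adj]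
      simp only [Fin.ext_iff]
      omega
    · rw [wm_adj]
      simp only [subdivideEdge_none_none, false_iff]
      omega
lemma cycleSq_adj (n : ℕ) (hn : 3 ≤ n) (a b : Fin n) :
    (cycleSq n).Adj a b ↔ a.val ≠ b.val ∧
      (a.val + 1 = b.val ∨ b.val + 1 = a.val ∨ a.val + 2 = b.val ∨ b.val + 2 = a.val ∨
       (a.val + 1 = n ∧ b.val = 0) ∨ (b.val + 1 = n ∧ a.val = 0) ∨
       (a.val + 2 = n ∧ b.val = 0) ∨ (b.val + 2 = n ∧ a.val = 0) ∨
       (a.val + 1 = n ∧ b.val = 1) ∨ (b.val + 1 = n ∧ a.val = 1)) := by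
  have key : ∀ x y : ℕ, x < n → y < n → ∀ c, (c = 1 ∨ c = 2) →
      ((x + c) % n = y ↔ (x + c = y ∨ (x + c = n ∧ y = 0) ∨ (x + c = n + 1 ∧ y = 1))) := by
    intro x y hx hy c hc
    rcases lt_trichotomy (x + c) n with hlt | heq | hgt
    · rw [Nat.mod_eq_of_lt hlt]; omega
    · rw [heq, Nat.mod_self]; omega
    · have h1 : x + c = n + 1 := by omega
      rw [h1, Nat.add_mod_left, Nat.mod_eq_of_lt (by omega)]; omega
  rw [cycleSq, SimpleGraph.fromRel_adj]
  rw [key a.val b.val a.isLt b.isLt 1 (Or.inl rfl), key a.val b.val a.isLt b.isLt 2 (Or.inr rfl),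
    key b.val a.val b.isLt a.isLt 1 (Or.inl rfl), key b.val a.val b.isLt a.isLt 2 (Or.inr rfl)]
  simp only [ne_eq, Fin.ext_iff]
  omega

def phiW (i : ℕ) : ℕ :=
  if i = 0 then 1 else if i = 1 then 2 else if i = 2 then 0 else if i ≤ 4 then i
  else 5 + (i - 6) / 2

def psiW (a : ℕ) : ℕ :=
  if a = 0 then 2 else if a = 1 then 0 else if a = 2 then 1 else if a ≤ 4 then a
  else 6 + 2 * (a - 5)

lemma phiW_spec (i : ℕ) (hi : i ≤ 4 ∨ (6 ≤ i ∧ i % 2 = 0)) :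
    (i = 0 ∧ phiW i = 1) ∨ (i = 1 ∧ phiW i = 2) ∨ (i = 2 ∧ phiW i = 0) ∨
    (i = 3 ∧ phiW i = 3) ∨ (i = 4 ∧ phiW i = 4) ∨
    (6 ≤ i ∧ 5 ≤ phiW i ∧ i = 2 * (phiW i - 5) + 6) := by
  unfold phiW; split_ifs <;> omega

lemma phiW_lt (m i : ℕ) (hi : i ≤ 4 ∨ (6 ≤ i ∧ i % 2 = 0 ∧ i ≤ 4 + 2 * m)) :
    phiW i < 5 + m := by
  unfold phiW; split_ifs <;> omega

lemma psiW_phiW (i : ℕ) (hi : i ≤ 4 ∨ (6 ≤ i ∧ i % 2 = 0)) : psiW (phiW i) = i := by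
  unfold phiW; split_ifs <;> (unfold psiW; split_ifs <;> first | omega | exact (‹False›).elim)

lemma phiW_psiW (a : ℕ) : phiW (psiW a) = a := by
  unfold psiW; split_ifs <;> (unfold phiW; split_ifs <;> first | omega | exact (‹False›).elim)

lemma psiW_mem (m a : ℕ) (ha : a < 5 + m) :
    (psiW a ≤ 4 ∨ (6 ≤ psiW a ∧ psiW a % 2 = 0 ∧ psiW a ≤ 4 + 2 * m)) ∧
      psiW a < 6 + 2 * m := by
  unfold psiW; split_ifs <;> omega

def SW (m : ℕ) : Set (Fin (6 + 2 * m)) :=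
  {i | i.val ≤ 4 ∨ (6 ≤ i.val ∧ Even i.val ∧ i.val ≤ (6 + 2 * m) - 2)}

lemma mem_SW (m : ℕ) (x : Fin (6 + 2 * m)) :
    x ∈ SW m ↔ (x.val ≤ 4 ∨ (6 ≤ x.val ∧ x.val % 2 = 0 ∧ x.val ≤ 4 + 2 * m)) := by
  simp only [SW, Set.mem_setOf_eq, Nat.even_iff]
  omega

lemma mem_SW_compl (m : ℕ) (x : Fin (6 + 2 * m)) :
    x ∈ (SW m)ᶜ ↔ (5 ≤ x.val ∧ x.val % 2 = 1) := by
  rw [Set.mem_compl_iff, mem_SW]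
  have := x.isLt
  omega

def swEquiv (m : ℕ) : ↥(SW m) ≃ Fin (5 + m) where
  toFun x := ⟨phiW x.1.val, phiW_lt m _ ((mem_SW m x.1).1 x.2)⟩
  invFun a := ⟨⟨psiW a.val, (psiW_mem m a.val a.isLt).2⟩,
    (mem_SW m _).2 (psiW_mem m a.val a.isLt).1⟩
  left_inv x := Subtype.ext (Fin.ext (by
    simp only [Fin.val_mk]
    exact psiW_phiW _ (by have := (mem_SW m x.1).1 x.2; omega)))
  right_inv a := Fin.ext (by
    simp only [Fin.val_mk]
    exact phiW_psiW a.val)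

lemma induce_adj {V : Type} (s : Set V) (G : SimpleGraph V) (a b : s) :
    (G.induce s).Adj a b ↔ G.Adj a.1 b.1 := by
  simp [SimpleGraph.induce]

lemma swEquiv_val (m : ℕ) (x : ↥(SW m)) : ((swEquiv m) x).val = phiW x.1.val := rfl

set_option maxHeartbeats 1000000 in
lemma key_arith (m i j a b : ℕ) (hi : i < 6 + 2 * m) (hj : j < 6 + 2 * m)
    (hmi : i ≤ 4 ∨ (6 ≤ i ∧ i % 2 = 0 ∧ i ≤ 4 + 2 * m))
    (hmj : j ≤ 4 ∨ (6 ≤ j ∧ j % 2 = 0 ∧ j ≤ 4 + 2 * m))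
    (hpi : (i = 0 ∧ a = 1) ∨ (i = 1 ∧ a = 2) ∨ (i = 2 ∧ a = 0) ∨ (i = 3 ∧ a = 3) ∨
      (i = 4 ∧ a = 4) ∨ (6 ≤ i ∧ 5 ≤ a ∧ i = 2 * (a - 5) + 6))
    (hpj : (j = 0 ∧ b = 1) ∨ (j = 1 ∧ b = 2) ∨ (j = 2 ∧ b = 0) ∨ (j = 3 ∧ b = 3) ∨
      (j = 4 ∧ b = 4) ∨ (6 ≤ j ∧ 5 ≤ b ∧ j = 2 * (b - 5) + 6)) :
    (a ≠ b ∧ ((a = 0 ∧ (b = 1 ∨ b = 2 ∨ b = 3 ∨ b = 4)) ∨ (1 ≤ a ∧ a + 1 = b) ∨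
      (a = 4 + m ∧ b = 1) ∨ (b = 0 ∧ (a = 1 ∨ a = 2 ∨ a = 3 ∨ a = 4)) ∨
      (1 ≤ b ∧ b + 1 = a) ∨ (b = 4 + m ∧ a = 1)))
    ↔ (i ≠ j ∧ (i + 1 = j ∨ j + 1 = i ∨ i + 2 = j ∨ j + 2 = i ∨
      (i + 1 = 6 + 2 * m ∧ j = 0) ∨ (j + 1 = 6 + 2 * m ∧ i = 0) ∨
      (i + 2 = 6 + 2 * m ∧ j = 0) ∨ (j + 2 = 6 + 2 * m ∧ i = 0) ∨
      (i + 1 = 6 + 2 * m ∧ j = 1) ∨ (j + 1 = 6 + 2 * m ∧ i = 1))) := by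
  rcases hpi with h|h|h|h|h|h <;> rcases hpj with g|g|g|g|g|g <;> omega

lemma sw_iso (m : ℕ) (x y : ↥(SW m)) :
    (Wm m).Adj ((swEquiv m) x) ((swEquiv m) y) ↔
      ((cycleSq (6 + 2 * m)).induce (SW m)).Adj x y := by
  rw [wm_adj]
  rw [_root_.induce_adj]
  rw [cycleSq_adj (6 + 2 * m) (by omega)]
  rw [swEquiv_val, swEquiv_val]
  exact key_arith m x.1.val y.1.val (phiW x.1.val) (phiW y.1.val) x.1.isLt y.1.isLt
    ((mem_SW m x.1).1 x.2) ((mem_SW m y.1).1 y.2)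
    (phiW_spec x.1.val (by have := (mem_SW m x.1).1 x.2; omega))
    (phiW_spec y.1.val (by have := (mem_SW m y.1).1 y.2; omega))
lemma sw_subdivision (m : ℕ) :
    IsSubdivisionOf ((cycleSq (6 + 2 * m)).induce (SW m)) (Wheel 4) :=
  isSubdivisionOf_of_iso ⟨swEquiv m, sw_iso m _ _⟩ (wm_subdivision m)

lemma sw_compl_connected (m : ℕ) :
    ((cycleSq (6 + 2 * m)).induce (SW m)ᶜ).Connected := by
  have h5 : (⟨5, by omega⟩ : Fin (6 + 2 * m)) ∈ (SW m)ᶜ := by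
    rw [mem_SW_compl]; exact ⟨le_rfl, by norm_num⟩
  have adjC : ∀ (u v : ↥(SW m)ᶜ), u.1.val + 2 = v.1.val →
      ((cycleSq (6 + 2 * m)).induce (SW m)ᶜ).Adj u v := by
    intro u v huv
    rw [_root_.induce_adj, cycleSq_adj (6 + 2 * m) (by omega)]
    have := v.1.isLt
    omega
  have reach : ∀ k (x : ↥(SW m)ᶜ), x.1.val = 5 + 2 * k →
      ((cycleSq (6 + 2 * m)).induce (SW m)ᶜ).Reachable ⟨⟨5, by omega⟩, h5⟩ x := by
    intro k
    induction k with
    | zero =>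
      intro x hx
      have : x = ⟨⟨5, by omega⟩, h5⟩ := Subtype.ext (Fin.ext (by simpa using hx))
      rw [this]
    | succ k ih =>
      intro x hx
      have hprev : (⟨5 + 2 * k, by omega⟩ : Fin (6 + 2 * m)) ∈ (SW m)ᶜ := by
        rw [mem_SW_compl]; simp only [Fin.val_mk]; omega
      have hr := ih ⟨⟨5 + 2 * k, by omega⟩, hprev⟩ rfl
      exact hr.trans (adjC _ x (by simp only [Fin.val_mk]; omega)).reachable
  rw [SimpleGraph.connected_iff]
  refine ⟨fun u v => ?_, ⟨⟨⟨5, by omega⟩, h5⟩⟩⟩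
  have hu := (mem_SW_compl m u.1).1 u.2
  have hv := (mem_SW_compl m v.1).1 v.2
  exact (reach ((u.1.val - 5) / 2) u (by omega)).symm.trans
    (reach ((v.1.val - 5) / 2) v (by omega))

/-- In the square of an even cycle of length at least 6, the vertex set
`{x_0,…,x_4, x_6, x_8, …, x_{ℓ-2}}` induces a subdivision of the wheel `W_4`, and
its complement induces a connected graph. -/
theorem stmt_6 (n : ℕ) (h : 6 ≤ n) (he : Even n) :
    IsSubdivisionOf ((cycleSq n).induce
        {i : Fin n | i.val ≤ 4 ∨ (6 ≤ i.val ∧ Even i.val ∧ i.val ≤ n - 2)}) (Wheel 4) ∧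
      ((cycleSq n).induce
        {i : Fin n | i.val ≤ 4 ∨ (6 ≤ i.val ∧ Even i.val ∧ i.val ≤ n - 2)}ᶜ).Connected := by
  obtain ⟨m, hm⟩ : ∃ m, n = 6 + 2 * m := by
    obtain ⟨k, hk⟩ := he; exact ⟨(n - 6) / 2, by omega⟩
  subst hm
  exact ⟨sw_subdivision m, sw_compl_connected m⟩
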